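/- For two independent Bernoulli distributions with parameters q_1 and q_2, the minimum over product distributions with identical marginals of the KL divergence from the product p_{q_1}⊗p_{q_2} equals 2H_2((q_1+q_2)/2) − H_2(q_1) − H_2(q_2), where H_2 is the binary entropy. -/

import Mathlib

open Finset

/-- The Bernoulli(q) probability mass function on `Bool`. -/
def bern (q : ℝ) : Bool → ℝ := fun b => if b then q else 1 - q

/-- Binary entropy function (base-2 logarithm). -/
noncomputable def H2 (q : ℝ) : ℝ :=
  -(q * Real.logb 2 q) - (1 - q) * Real.logb 2 (1 - q)

/-- KL divergence (in bits) of the product `Bern(q₁) ⊗ Bern(q₂)` from `Bern(r) ⊗ Bern(r)`. -/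
noncomputable def klJoint (q₁ q₂ r : ℝ) : ℝ :=
  ∑ a : Bool, ∑ b : Bool,
    bern q₁ a * bern q₂ b *
      Real.logb 2 ((bern q₁ a * bern q₂ b) / (bern r a * bern r b))

lemma logb_helper {a b c d : ℝ} (ha : a ≠ 0) (hb : b ≠ 0) (hc : c ≠ 0) (hd : d ≠ 0) :
    Real.logb 2 ((a * b) / (c * d)) =
      Real.logb 2 a + Real.logb 2 b - Real.logb 2 c - Real.logb 2 d := by
  rw [Real.logb_div (mul_ne_zero ha hb) (mul_ne_zero hc hd),
    Real.logb_mul ha hb, Real.logb_mul hc hd]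
  ring

lemma klJoint_eq {q₁ q₂ r : ℝ} (h₁ : q₁ ∈ Set.Ioo (0:ℝ) 1) (h₂ : q₂ ∈ Set.Ioo (0:ℝ) 1)
    (hr : r ∈ Set.Ioo (0:ℝ) 1) :
    klJoint q₁ q₂ r =
      q₁ * Real.logb 2 q₁ + (1 - q₁) * Real.logb 2 (1 - q₁)
      + q₂ * Real.logb 2 q₂ + (1 - q₂) * Real.logb 2 (1 - q₂)
      - (q₁ + q₂) * Real.logb 2 r - (2 - q₁ - q₂) * Real.logb 2 (1 - r) := by
  have hq₁ : q₁ ≠ 0 := ne_of_gt h₁.1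
  have hq₁' : (1 - q₁) ≠ 0 := ne_of_gt (by linarith [h₁.2])
  have hq₂ : q₂ ≠ 0 := ne_of_gt h₂.1
  have hq₂' : (1 - q₂) ≠ 0 := ne_of_gt (by linarith [h₂.2])
  have hr0 : r ≠ 0 := ne_of_gt hr.1
  have hr1 : (1 - r) ≠ 0 := ne_of_gt (by linarith [hr.2])
  simp only [klJoint, bern, Fintype.sum_bool, Bool.false_eq_true, if_true, if_false]
  rw [logb_helper hq₁ hq₂ hr0 hr0, logb_helper hq₁ hq₂' hr0 hr1,
    logb_helper hq₁' hq₂ hr1 hr0, logb_helper hq₁' hq₂' hr1 hr1]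
  ring

lemma gibbs {m r : ℝ} (hm : m ∈ Set.Ioo (0:ℝ) 1) (hr : r ∈ Set.Ioo (0:ℝ) 1) :
    m * (Real.log r - Real.log m) + (1 - m) * (Real.log (1 - r) - Real.log (1 - m)) ≤ 0 := by
  have hm1 : (0:ℝ) < 1 - m := by linarith [hm.2]
  have hr1 : (0:ℝ) < 1 - r := by linarith [hr.2]
  have h1 : Real.log r - Real.log m ≤ r / m - 1 := by
    rw [← Real.log_div (ne_of_gt hr.1) (ne_of_gt hm.1)]
    exact Real.log_le_sub_one_of_pos (div_pos hr.1 hm.1)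
  have h2 : Real.log (1 - r) - Real.log (1 - m) ≤ (1 - r) / (1 - m) - 1 := by
    rw [← Real.log_div (ne_of_gt hr1) (ne_of_gt hm1)]
    exact Real.log_le_sub_one_of_pos (div_pos hr1 hm1)
  have hm0 : m ≠ 0 := ne_of_gt hm.1
  have hm1' : (1 : ℝ) - m ≠ 0 := ne_of_gt hm1
  have e1 : m * (r / m - 1) = r - m := by
    field_simp
  have e2 : (1 - m) * ((1 - r) / (1 - m) - 1) = m - r := by
    field_simp
    ring
  nlinarith [mul_le_mul_of_nonneg_left h1 (le_of_lt hm.1),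
    mul_le_mul_of_nonneg_left h2 (le_of_lt hm1)]

/-- The minimum over product distributions with identical marginals `r₁ = r₂ = r` of the
KL divergence from `Bern(q₁) ⊗ Bern(q₂)` equals `2H₂((q₁+q₂)/2) − H₂(q₁) − H₂(q₂)`. -/
theorem stmt5 (q₁ q₂ : ℝ) (h₁ : q₁ ∈ Set.Ioo (0:ℝ) 1) (h₂ : q₂ ∈ Set.Ioo (0:ℝ) 1) :
    IsLeast {v : ℝ | ∃ r ∈ Set.Ioo (0:ℝ) 1, v = klJoint q₁ q₂ r}
      (2 * H2 ((q₁ + q₂) / 2) - H2 q₁ - H2 q₂) := by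
  set m := (q₁ + q₂) / 2 with hm_def
  have hm : m ∈ Set.Ioo (0:ℝ) 1 := by
    constructor
    · have := h₁.1; have := h₂.1; simp only [hm_def]; linarith
    · have := h₁.2; have := h₂.2; simp only [hm_def]; linarith
  have hval : 2 * H2 m - H2 q₁ - H2 q₂ = klJoint q₁ q₂ m := by
    rw [klJoint_eq h₁ h₂ hm]
    simp only [H2, hm_def]
    have : 1 - (q₁ + q₂) / 2 = (2 - q₁ - q₂) / 2 := by ring
    rw [this]
    ring
  constructor
  · exact ⟨m, hm, hval⟩
  · rintro v ⟨r, hr, rfl⟩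
    rw [hval, klJoint_eq h₁ h₂ hm, klJoint_eq h₁ h₂ hr]
    have key := gibbs hm hr
    have hlog2 : (0:ℝ) < Real.log 2 := Real.log_pos (by norm_num)
    have key2 : m * (Real.logb 2 r - Real.logb 2 m)
        + (1 - m) * (Real.logb 2 (1 - r) - Real.logb 2 (1 - m)) ≤ 0 := by
      simp only [Real.logb]
      rw [div_sub_div_same, div_sub_div_same]
      rw [show m * ((Real.log r - Real.log m) / Real.log 2)
          + (1 - m) * ((Real.log (1 - r) - Real.log (1 - m)) / Real.log 2)
          = (m * (Real.log r - Real.log m)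
            + (1 - m) * (Real.log (1 - r) - Real.log (1 - m))) / Real.log 2 by ring]
      exact div_nonpos_of_nonpos_of_nonneg key (le_of_lt hlog2)
    have hq : q₁ + q₂ = 2 * m := by rw [hm_def]; ring
    have hq' : 2 - q₁ - q₂ = 2 * (1 - m) := by rw [hm_def]; ring
    have key3 : (q₁ + q₂) * (Real.logb 2 r - Real.logb 2 m)
        + (2 - q₁ - q₂) * (Real.logb 2 (1 - r) - Real.logb 2 (1 - m)) ≤ 0 := by
      rw [hq, hq']; nlinarith [key2]
    linarith [key3]
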